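/- arXiv:2112.11265 — 8 statements merged into one kernel-verified Lean document; each statement's English description precedes it below -/
import Mathlib

section
/- Let (τ^n)_{n∈ℕ} be a sequence of nondecreasing functions τ^n : [0,∞) → [0,∞) with τ^n(t) ≤ t for all t ≥ 0, satisfying: τ^n([0,t]) ⊆ τ^{n+1}([0,t]) for all n and t, and the closure of ∪_{n∈ℕ} τ^n([0,t]) equals [0,t] for every t ≥ 0. Then for every t > 0, sup_{0 ≤ s ≤ t} |s − τ^n(s)| → 0 as n → ∞, i.e. τ^n converges to the identity uniformly on compact subsets of [0,∞). -/
open Filter Topology Set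

/-- Proposition 3.1(a). A refining sequence of delays that increases to
identity converges to the identity uniformly on compact intervals: for every `t > 0`,
`sup_{0 ≤ s ≤ t} |s - τ n s| → 0` as `n → ∞`. -/
theorem delays_refining_tendstoUniformly_id
    (τ : ℕ → ℝ → ℝ)
    (hpos : ∀ n s, 0 ≤ s → 0 ≤ τ n s)
    (hmono : ∀ n, ∀ s t, 0 ≤ s → s ≤ t → τ n s ≤ τ n t)
    (hle : ∀ n t, 0 ≤ t → τ n t ≤ t)
    (href : ∀ n t, 0 ≤ t → τ n '' Icc 0 t ⊆ τ (n + 1) '' Icc 0 t)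
    (hdense : ∀ t, 0 ≤ t → closure (⋃ n, τ n '' Icc 0 t) = Icc 0 t) :
    ∀ t, 0 < t →
      Tendsto (fun n => ⨆ s : Icc (0 : ℝ) t, |(s : ℝ) - τ n s|) atTop (𝓝 0) := by
  -- images are monotone in n
  have himg : ∀ u : ℝ, 0 ≤ u → ∀ m n : ℕ, m ≤ n →
      τ m '' Icc 0 u ⊆ τ n '' Icc 0 u := by
    intro u hu m n hmn
    induction n with
    | zero =>
      have : m = 0 := Nat.le_zero.mp hmn
      subst this; exact subset_rfl
    | succ n ih =>
      rcases Nat.lt_or_ge m (n + 1) with h | h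
      · exact (ih (Nat.lt_succ_iff.mp h)).trans (href n u hu)
      · have : m = n + 1 := le_antisymm hmn h
        subst this; exact subset_rfl
  -- pointwise convergence: for each s ≥ 0 and ε > 0, eventually s - τ n s ≤ ε
  have key : ∀ s : ℝ, 0 ≤ s → ∀ ε : ℝ, 0 < ε → ∃ N, ∀ n ≥ N, s - τ n s ≤ ε := by
    intro s hs ε hε
    have hsmem : s ∈ closure (⋃ n, τ n '' Icc 0 s) := by
      rw [hdense s hs]; exact ⟨hs, le_refl s⟩
    obtain ⟨y, hy, hyd⟩ := Metric.mem_closure_iff.mp hsmem ε hε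
    rw [mem_iUnion] at hy
    obtain ⟨N, hyN⟩ := hy
    refine ⟨N, fun n hn => ?_⟩
    obtain ⟨v, hv, hvy⟩ := himg s hs N n hn hyN
    have h1 : τ n v ≤ τ n s := hmono n v s hv.1 hv.2
    have h2 : |s - y| < ε := by
      simpa [Real.dist_eq] using hyd
    have h3 := abs_lt.mp h2
    have h4 : y ≤ τ n s := hvy ▸ h1
    linarith [h3.2]
  intro t ht
  rw [Metric.tendsto_atTop]
  intro ε hε
  set ε' := ε / 3 with hε'def
  have hε' : 0 < ε' := by positivity
  obtain ⟨k, hk⟩ : ∃ k : ℕ, t / ε' < k := exists_nat_gt _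
  have hk0 : 0 < (k : ℝ) := lt_of_le_of_lt (by positivity) hk
  have hmesh : t / k < ε' := by
    rw [div_lt_iff₀ hk0]
    have := (div_lt_iff₀ hε').mp hk
    linarith [this]
  -- choose thresholds at the grid points i*t/k
  have hkey : ∀ i : ℕ, ∃ N, ∀ n ≥ N, (i : ℝ) * t / k - τ n ((i : ℝ) * t / k) ≤ ε' := by
    intro i
    exact key ((i : ℝ) * t / k) (by positivity) ε' hε'
  choose Ns hNs using hkey
  refine ⟨(Finset.range (k + 1)).sup Ns, fun n hn => ?_⟩
  -- bound the sup
  have hbound : ∀ s : Icc (0 : ℝ) t, |(s : ℝ) - τ n s| ≤ 2 * ε' := by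
    rintro ⟨s, hs0, hst⟩
    simp only
    set i : ℕ := ⌊s * k / t⌋₊ with hidef
    have hsk0 : 0 ≤ s * k / t := by positivity
    have hfle : (i : ℝ) ≤ s * k / t := Nat.floor_le hsk0
    have hflt : s * k / t < (i : ℝ) + 1 := Nat.lt_floor_add_one _
    have hik : i ≤ k := by
      have h1 : s * k / t ≤ k := by
        rw [div_le_iff₀ ht]
        nlinarith
      have := Nat.floor_le_floor (R := ℝ) h1
      simpa [hidef, Nat.floor_natCast] using this
    set p : ℝ := (i : ℝ) * t / k with hpdef
    have hp0 : 0 ≤ p := by positivity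
    have hps : p ≤ s := by
      rw [hpdef, div_le_iff₀ hk0]
      have := (le_div_iff₀ ht).mp hfle
      nlinarith
    have hsp : s < p + t / k := by
      rw [hpdef]
      have := (div_lt_iff₀ ht).mp hflt
      have hkinv : (0:ℝ) < 1 / k := by positivity
      rw [← add_div, lt_div_iff₀ hk0]
      nlinarith
    have hnN : Ns i ≤ n := le_trans (Finset.le_sup (Finset.mem_range.mpr (Nat.lt_succ_of_le hik))) hn
    have hiconv : p - τ n p ≤ ε' := hNs i n hnN
    have hmon : τ n p ≤ τ n s := hmono n p s hp0 hps
    have hτle : τ n s ≤ s := hle n s hs0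
    rw [abs_of_nonneg (by linarith)]
    have : s - τ n s ≤ (s - p) + (p - τ n p) := by linarith
    have hs_p : s - p ≤ t / k := by linarith
    linarith
  haveI : Nonempty (Icc (0:ℝ) t) := ⟨⟨0, le_refl 0, le_of_lt ht⟩⟩
  have hsuple : (⨆ s : Icc (0 : ℝ) t, |(s : ℝ) - τ n s|) ≤ 2 * ε' := by
    apply ciSup_le (fun s => hbound s)
  have hsup0 : 0 ≤ ⨆ s : Icc (0 : ℝ) t, |(s : ℝ) - τ n s| :=
    Real.iSup_nonneg (fun s => abs_nonneg _)
  rw [Real.dist_eq]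
  rw [abs_of_nonneg (by simpa using hsup0)]
  simp only [sub_zero]
  linarith
end

section
/- Let f : [0,∞) → ℝ be right-continuous with left limits (càdlàg), and let (τ^n)_{n∈ℕ} be nondecreasing functions τ^n : [0,∞) → [0,∞) with τ^n(s) ≤ s for all s, such that sup_{0 ≤ s ≤ t'} |s − τ^n(s)| → 0 as n → ∞ for every t' > 0. Then for every t > 0 the left limit (f∘τ^n)(t−) = lim_{s↑t, s<t} f(τ^n(s)) exists for every n, and (f∘τ^n)(t−) → f(t−) as n → ∞, where f(t−) = lim_{s↑t, s<t} f(s). -/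
open Filter Topology Set

/-- Proposition 3.1(b), pathwise. Let `f` be càdlàg on `[0,∞)` and let
`τ n` be nondecreasing delays (`0 ≤ τ n s ≤ s`) converging to the identity uniformly on
compacts. Then for every `t > 0` the left limits `(f ∘ τ n)(t-)` exist and converge to the
left limit `f(t-)`. -/
theorem delayed_path_leftLim_tendsto
    (f : ℝ → ℝ)
    (hrc : ∀ t, 0 ≤ t → ContinuousWithinAt f (Ici t) t)
    (hll : ∀ t, 0 < t → ∃ L, Tendsto f (𝓝[<] t) (𝓝 L))
    (τ : ℕ → ℝ → ℝ)
    (hpos : ∀ n s, 0 ≤ s → 0 ≤ τ n s)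
    (hmono : ∀ n, ∀ s t, 0 ≤ s → s ≤ t → τ n s ≤ τ n t)
    (hle : ∀ n s, 0 ≤ s → τ n s ≤ s)
    (hunif : ∀ t', 0 < t' →
      Tendsto (fun n => ⨆ s : Icc (0 : ℝ) t', |(s : ℝ) - τ n s|) atTop (𝓝 0)) :
    ∀ t, 0 < t → ∀ M, Tendsto f (𝓝[<] t) (𝓝 M) →
      ∃ L : ℕ → ℝ,
        (∀ n, Tendsto (f ∘ τ n) (𝓝[<] t) (𝓝 (L n))) ∧ Tendsto L atTop (𝓝 M) := by
  intro t ht M hM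
  set c : ℕ → ℝ := fun n => sSup (τ n '' Ico 0 t) with hc
  have hne : ∀ n, (τ n '' Ico 0 t).Nonempty := fun n => ⟨τ n 0, 0, ⟨le_refl 0, ht⟩, rfl⟩
  have hbdd : ∀ n, BddAbove (τ n '' Ico 0 t) := by
    intro n
    refine ⟨t, ?_⟩
    rintro x ⟨s, hs, rfl⟩
    exact (hle n s hs.1).trans hs.2.le
  have hcle : ∀ n, ∀ s ∈ Ico (0:ℝ) t, τ n s ≤ c n := fun n s hs =>
    le_csSup (hbdd n) ⟨s, hs, rfl⟩
  have hct : ∀ n, c n ≤ t := fun n => csSup_le (hne n)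
    (by rintro x ⟨s, hs, rfl⟩; exact (hle n s hs.1).trans hs.2.le)
  have hc0 : ∀ n, 0 ≤ c n := fun n =>
    le_trans (hpos n 0 le_rfl) (hcle n 0 ⟨le_rfl, ht⟩)
  -- τ n tends to c n from the left at t
  have htend : ∀ n, Tendsto (τ n) (𝓝[<] t) (𝓝 (c n)) := by
    intro n
    rw [tendsto_order]
    constructor
    · intro a ha
      obtain ⟨x, ⟨s, hs, rfl⟩, hx⟩ := exists_lt_of_lt_csSup (hne n) ha
      filter_upwards [Ioo_mem_nhdsLT_of_mem ⟨hs.2, le_refl t⟩] with u hu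
      exact lt_of_lt_of_le hx (hmono n s u hs.1 hu.1.le)
    · intro a ha
      filter_upwards [Ioo_mem_nhdsLT_of_mem ⟨ht, le_refl t⟩] with u hu
      exact lt_of_le_of_lt (hcle n u ⟨hu.1.le, hu.2⟩) ha
  have key : ∀ n, ∃ l, Tendsto (f ∘ τ n) (𝓝[<] t) (𝓝 l) ∧
      ∀ ε, 0 < ε → ∀ δ, 0 < δ → (∀ s, t - δ < s → s < t → |f s - M| ≤ ε) →
        t - δ < c n → |l - M| ≤ ε := by
    intro n
    by_cases hcase : ∃ s ∈ Ico (0:ℝ) t, τ n s = c n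
    · obtain ⟨s0, hs0, hs0e⟩ := hcase
      have hev : ∀ᶠ u in 𝓝[<] t, (f ∘ τ n) u = f (c n) := by
        filter_upwards [Ioo_mem_nhdsLT_of_mem ⟨hs0.2, le_refl t⟩] with u hu
        have h1 : τ n u ≤ c n := hcle n u ⟨hs0.1.trans hu.1.le, hu.2⟩
        have h2 : c n ≤ τ n u := hs0e ▸ hmono n s0 u hs0.1 hu.1.le
        simp [Function.comp, le_antisymm h1 h2]
      refine ⟨f (c n), Tendsto.congr' (hev.mono fun u h => h.symm) tendsto_const_nhds, ?_⟩
      intro ε hε δ hδ hδf hδc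
      have hcnt : c n < t := by
        rcases lt_or_eq_of_le (hct n) with h | h
        · exact h
        · exfalso
          have h1 : τ n s0 ≤ s0 := hle n s0 hs0.1
          rw [hs0e, h] at h1
          exact absurd h1 (not_le.2 hs0.2)
      exact hδf (c n) hδc hcnt
    · push_neg at hcase
      have hstrict : ∀ s ∈ Ico (0:ℝ) t, τ n s < c n := fun s hs =>
        lt_of_le_of_ne (hcle n s hs) (hcase s hs)
      have hcpos : 0 < c n := lt_of_le_of_lt (hpos n 0 le_rfl) (hstrict 0 ⟨le_rfl, ht⟩)
      obtain ⟨l, hl⟩ := hll (c n) hcpos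
      have hτlt : Tendsto (τ n) (𝓝[<] t) (𝓝[<] (c n)) := by
        refine tendsto_nhdsWithin_of_tendsto_nhds_of_eventually_within _ (htend n) ?_
        filter_upwards [Ioo_mem_nhdsLT_of_mem ⟨ht, le_refl t⟩] with u hu
        exact hstrict u ⟨hu.1.le, hu.2⟩
      refine ⟨l, hl.comp hτlt, ?_⟩
      intro ε hε δ hδ hδf hδc
      rcases lt_or_eq_of_le (hct n) with hlt | heq
      · have hev : ∀ᶠ s in 𝓝[<] (c n), |f s - M| ≤ ε := by
          filter_upwards [Ioo_mem_nhdsLT_of_mem ⟨hδc, le_refl (c n)⟩] with u hu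
          exact hδf u hu.1 (hu.2.trans hlt)
        have habs : Tendsto (fun s => |f s - M|) (𝓝[<] (c n)) (𝓝 |l - M|) :=
          (hl.sub tendsto_const_nhds).abs
        exact le_of_tendsto habs hev
      · rw [heq] at hl
        have hlM : l = M := tendsto_nhds_unique hl hM
        simp [hlM, hε.le]
  choose L hL hLbound using key
  refine ⟨L, hL, ?_⟩
  rw [Metric.tendsto_atTop]
  intro ε hε
  have hε2 : 0 < ε / 2 := by positivity
  have hev : f ⁻¹' Metric.ball M (ε / 2) ∈ 𝓝[<] t := hM (Metric.ball_mem_nhds M hε2)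
  obtain ⟨a0, ha0t, ha0⟩ := mem_nhdsLT_iff_exists_Ioo_subset.mp hev
  have ha0t' : a0 < t := ha0t
  have hδ : 0 < t - a0 := sub_pos.2 ha0t'
  have hbound : ∀ s, t - (t - a0) < s → s < t → |f s - M| ≤ ε / 2 := by
    intro s h1 h2
    have hs : s ∈ Ioo a0 t := ⟨by linarith, h2⟩
    have := ha0 hs
    rw [Set.mem_preimage, Metric.mem_ball, Real.dist_eq] at this
    exact this.le
  set q : ℝ := max (t / 2) ((a0 + t) / 2) with hq
  have hqt : q < t := max_lt (by linarith) (by linarith)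
  have hq0 : 0 ≤ q := le_trans (by linarith) (le_max_left _ _)
  have hqa0 : a0 < q := lt_of_lt_of_le (by linarith) (le_max_right _ _)
  have hγ : 0 < q - a0 := sub_pos.2 hqa0
  have hbdd2 : ∀ n, BddAbove (Set.range fun s : Icc (0:ℝ) t => |(s : ℝ) - τ n s|) := by
    intro n
    refine ⟨t, ?_⟩
    rintro x ⟨s, rfl⟩
    have h1 := hle n s s.2.1
    have h2 := hpos n s s.2.1
    have h3 := s.2.1
    have h4 := s.2.2
    rw [abs_le]
    constructor <;> linarith
  have hsup : ∀ᶠ n in atTop, (⨆ s : Icc (0:ℝ) t, |(s : ℝ) - τ n s|) < q - a0 :=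
    (hunif t ht).eventually (gt_mem_nhds hγ)
  obtain ⟨N, hN⟩ := hsup.exists_forall_of_atTop
  refine ⟨N, fun n hn => ?_⟩
  have hsn := hN n hn
  have hτq : |q - τ n q| ≤ ⨆ s : Icc (0:ℝ) t, |(s : ℝ) - τ n s| :=
    le_ciSup (hbdd2 n) (⟨q, hq0, hqt.le⟩ : Icc (0:ℝ) t)
  have h5 : q - τ n q ≤ |q - τ n q| := le_abs_self _
  have h6 : a0 < τ n q := by linarith
  have h7 : τ n q ≤ c n := hcle n q ⟨hq0, hqt⟩
  have h8 : t - (t - a0) < c n := by linarith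
  have := hLbound n (ε / 2) hε2 (t - a0) hδ hbound h8
  rw [Real.dist_eq]
  linarith
end

section
/- Let (Ω, 𝒜) be a measurable space and X = (X_1, …, X_m) a family of stochastic processes X_i : Ω × [0,∞) → ℝ with ω ↦ X_i(ω,u) measurable for every u and with right-continuous paths. Let (τ^n)_{n∈ℕ} be a sequence of delays, i.e. each τ^n = (τ^n_1,…,τ^n_m) with τ^n_i : [0,∞) → [0,∞) nondecreasing, right-continuous and τ^n_i(s) ≤ s, satisfying τ^n_i([0,t]) ⊆ τ^{n+1}_i([0,t]) for all n, t, i, and closure(∪_n τ^n_i([0,t])) = [0,t] for all t, i. Fix t > 0 and set 𝒢_n := σ( X_i(·, τ^n_i(s)) : 1 ≤ i ≤ m, 0 ≤ s < t ). Then the sequence (𝒢_n)_{n∈ℕ} is nondecreasing, each 𝒢_n is contained in σ( X_i(·,u) : 1 ≤ i ≤ m, 0 ≤ u < t ), and ⋁_{n∈ℕ} 𝒢_n = σ( X_i(·,u) : 1 ≤ i ≤ m, 0 ≤ u < t ). -/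
open Filter Topology Set

/-- Proposition 3.1(c). For a tuple of right-continuous processes and a
refining sequence of delays increasing to identity, the σ-algebras generated by the delayed
observations before time `t` form a nondecreasing sequence, each contained in the σ-algebra
generated by the undelayed observations before `t`, and their supremum equals the latter. -/
theorem delayed_information_increases_to_full
    {Ω : Type*} [MeasurableSpace Ω] {m : ℕ} (hm : 1 ≤ m)
    (X : Fin m → Ω → ℝ → ℝ)
    (hmeas : ∀ i u, 0 ≤ u → Measurable fun ω => X i ω u)
    (hrc : ∀ i ω u, 0 ≤ u → ContinuousWithinAt (X i ω) (Ici u) u)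
    (τ : ℕ → Fin m → ℝ → ℝ)
    (hpos : ∀ n i s, 0 ≤ s → 0 ≤ τ n i s)
    (hmono : ∀ n i, ∀ s u, 0 ≤ s → s ≤ u → τ n i s ≤ τ n i u)
    (hrcτ : ∀ n i s, 0 ≤ s → ContinuousWithinAt (τ n i) (Ici s) s)
    (hle : ∀ n i s, 0 ≤ s → τ n i s ≤ s)
    (href : ∀ n i u, 0 ≤ u → τ n i '' Icc 0 u ⊆ τ (n + 1) i '' Icc 0 u)
    (hdense : ∀ i u, 0 ≤ u → closure (⋃ n, τ n i '' Icc 0 u) = Icc 0 u)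
    (t : ℝ) (ht : 0 < t) :
    Monotone (fun n => ⨆ i : Fin m, ⨆ s ∈ Ico (0 : ℝ) t,
        MeasurableSpace.comap (fun ω => X i ω (τ n i s)) inferInstance) ∧
    (∀ n, (⨆ i : Fin m, ⨆ s ∈ Ico (0 : ℝ) t,
        MeasurableSpace.comap (fun ω => X i ω (τ n i s)) inferInstance) ≤
      ⨆ i : Fin m, ⨆ u ∈ Ico (0 : ℝ) t,
        MeasurableSpace.comap (fun ω => X i ω u) inferInstance) ∧
    (⨆ n : ℕ, ⨆ i : Fin m, ⨆ s ∈ Ico (0 : ℝ) t,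
        MeasurableSpace.comap (fun ω => X i ω (τ n i s)) inferInstance) =
      ⨆ i : Fin m, ⨆ u ∈ Ico (0 : ℝ) t,
        MeasurableSpace.comap (fun ω => X i ω u) inferInstance := by
  have hsub : ∀ n, (⨆ i : Fin m, ⨆ s ∈ Ico (0 : ℝ) t,
      MeasurableSpace.comap (fun ω => X i ω (τ n i s)) inferInstance) ≤
      ⨆ i : Fin m, ⨆ u ∈ Ico (0 : ℝ) t,
        MeasurableSpace.comap (fun ω => X i ω u) inferInstance := by
    intro n
    refine iSup_le fun i => iSup_le fun s => iSup_le fun hs => ?_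
    have hmem : τ n i s ∈ Ico (0 : ℝ) t :=
      ⟨hpos n i s hs.1, lt_of_le_of_lt (hle n i s hs.1) hs.2⟩
    exact le_iSup_of_le i (le_iSup_of_le (τ n i s) (le_iSup_of_le hmem le_rfl))
  refine ⟨?_, hsub, ?_⟩
  · refine monotone_nat_of_le_succ fun n => ?_
    refine iSup_le fun i => iSup_le fun s => iSup_le fun hs => ?_
    obtain ⟨s', hs', heq⟩ := href n i s hs.1 ⟨s, ⟨⟨hs.1, le_rfl⟩, rfl⟩⟩
    have hs'mem : s' ∈ Ico (0 : ℝ) t := ⟨hs'.1, lt_of_le_of_lt hs'.2 hs.2⟩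
    refine le_iSup_of_le i (le_iSup_of_le s' (le_iSup_of_le hs'mem ?_))
    rw [heq]
  · refine le_antisymm (iSup_le hsub) ?_
    refine iSup_le fun i => iSup_le fun u => iSup_le fun hu => ?_
    set M : MeasurableSpace Ω := ⨆ n : ℕ, ⨆ i : Fin m, ⨆ s ∈ Ico (0 : ℝ) t,
        MeasurableSpace.comap (fun ω => X i ω (τ n i s)) inferInstance with hM
    rw [← @measurable_iff_comap_le Ω ℝ M _ (fun ω => X i ω u)]
    -- density argument
    set u'' : ℝ := (u + t) / 2 with hu''
    have huu : u < u'' := by simp only [hu'']; linarith [hu.2]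
    have hut : u'' < t := by simp only [hu'']; linarith [hu.2]
    have hu''0 : (0 : ℝ) ≤ u'' := le_trans hu.1 huu.le
    have hcl := hdense i u'' hu''0
    -- for each k, find a point of the union in (u, u + 1/(k+1))
    have hexists : ∀ k : ℕ, ∃ v, v ∈ (⋃ n, τ n i '' Icc 0 u'') ∧
        u < v ∧ v < u + 1 / (k + 1) := by
      intro k
      have hk : (0 : ℝ) < 1 / (k + 1) := by positivity
      set p : ℝ := min ((u + u'') / 2) (u + 1 / (k + 1) / 2) with hp
      have hpu : u < p := by
        apply lt_min (by linarith) (by linarith)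
      have hpu'' : p ≤ u'' := le_trans (min_le_left _ _) (by linarith)
      have hpb : p < u + 1 / (k + 1) := lt_of_le_of_lt (min_le_right _ _) (by linarith)
      have hpmem : p ∈ closure (⋃ n, τ n i '' Icc 0 u'') := by
        rw [hcl]; exact ⟨le_trans hu.1 hpu.le, hpu''⟩
      rw [Metric.mem_closure_iff] at hpmem
      obtain ⟨v, hv, hdist⟩ := hpmem (min (p - u) (u + 1 / (k + 1) - p))
        (lt_min (by linarith) (by linarith))
      rw [Real.dist_eq, abs_sub_comm] at hdist
      have h2 := abs_lt.mp hdist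
      have hm1 : min (p - u) (u + 1 / (k + 1) - p) ≤ p - u := min_le_left _ _
      have hm2 : min (p - u) (u + 1 / (k + 1) - p) ≤ u + 1 / (k + 1) - p := min_le_right _ _
      exact ⟨v, hv, by linarith [h2.1], by linarith [h2.2]⟩
    choose v hvmem hvgt hvlt using hexists
    have hvtend : Tendsto v atTop (𝓝 u) := by
      have h1 : Tendsto (fun k : ℕ => u + 1 / ((k : ℝ) + 1)) atTop (𝓝 (u + 0)) :=
        tendsto_const_nhds.add tendsto_one_div_add_atTop_nhds_zero_nat
      rw [add_zero] at h1
      exact tendsto_of_tendsto_of_tendsto_of_le_of_le tendsto_const_nhds h1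
        (fun k => (hvgt k).le) (fun k => (hvlt k).le)
    have hvtend' : Tendsto v atTop (𝓝[Ici u] u) := by
      rw [tendsto_nhdsWithin_iff]
      exact ⟨hvtend, Eventually.of_forall fun k => (hvgt k).le⟩
    have hmeasv : ∀ k, @Measurable Ω ℝ M _ (fun ω => X i ω (v k)) := by
      intro k
      obtain ⟨n, s, hs, heq⟩ := by
        have := hvmem k
        simp only [mem_iUnion, mem_image] at this
        exact this
      have hsmem : s ∈ Ico (0 : ℝ) t := ⟨hs.1, lt_of_le_of_lt hs.2 hut⟩
      have hle' : MeasurableSpace.comap (fun ω => X i ω (τ n i s)) inferInstance ≤ M :=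
        le_iSup_of_le n (le_iSup_of_le i (le_iSup_of_le s (le_iSup_of_le hsmem le_rfl)))
      rw [@measurable_iff_comap_le Ω ℝ M _]
      rw [← heq]
      exact hle'
    refine measurable_of_tendsto_metrizable (f := fun k ω => X i ω (v k)) hmeasv ?_
    rw [tendsto_pi_nhds]
    intro ω
    exact ((hrc i ω u hu.1).tendsto).comp hvtend'
end

section
/- Let G be an additive commutative group, m ≥ 1, and U : [0,∞)^m → G any function. Let 0 = s_0 < s_1 < s_2 < ⋯ be an unbounded partition of [0,∞). For i ∈ {1,…,m} and t ≥ 0 define D_i(t) = Σ_{l≥0} [ U(v^{l,i}(t)) − U(w^{l,i}(t)) ], where v^{l,i}(t) has coordinates s_{l+1}∧t in positions 1,…,i and s_l∧t in positions i+1,…,m, and w^{l,i}(t) has coordinates s_{l+1}∧t in positions 1,…,i−1 and s_l∧t in positions i,…,m. Then each of these sums has only finitely many nonzero terms (every term with s_l ≥ t vanishes), and for every t ≥ 0: Σ_{i=1}^m D_i(t) = U(t,…,t) − U(0,…,0). -/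
open Filter Topology Set

/-- The sequentially-updated time vector `v^{l,i}(t)`: coordinates `s_{l+1} ∧ t` in
positions `j ≤ i` and `s_l ∧ t` in positions `j > i`. -/
def suV {m : ℕ} (s : ℕ → ℝ) (l : ℕ) (i : Fin m) (t : ℝ) : Fin m → ℝ :=
  fun j => if j ≤ i then min (s (l + 1)) t else min (s l) t

/-- The time vector `w^{l,i}(t)`: coordinates `s_{l+1} ∧ t` in positions `j < i` and
`s_l ∧ t` in positions `j ≥ i`. -/
def suW {m : ℕ} (s : ℕ → ℝ) (l : ℕ) (i : Fin m) (t : ℝ) : Fin m → ℝ :=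
  fun j => if j < i then min (s (l + 1)) t else min (s l) t

/-- additivity of the SU decomposition, Proposition 4.1. For any function
`U` on `[0,∞)^m` with values in an additive commutative group and any unbounded partition
`0 = s_0 < s_1 < ⋯`, every SU term with `s_l ≥ t` vanishes, and the SU components sum up to
the total increment `U(t,…,t) - U(0,…,0)`. -/
theorem su_decomposition_additive
    {G : Type*} [AddCommGroup G] {m : ℕ} (hm : 1 ≤ m)
    (U : (Fin m → ℝ) → G)
    (s : ℕ → ℝ) (hs0 : s 0 = 0) (hsmono : StrictMono s)
    (hsunbdd : Tendsto s atTop atTop)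
    (t : ℝ) (ht : 0 ≤ t) :
    (∀ (i : Fin m) (l : ℕ), t ≤ s l → U (suV s l i t) - U (suW s l i t) = 0) ∧
    ∑ i : Fin m, ∑ᶠ l : ℕ, (U (suV s l i t) - U (suW s l i t)) =
      U (fun _ => t) - U (fun _ => 0) := by
  have hvanish : ∀ (i : Fin m) (l : ℕ), t ≤ s l →
      U (suV s l i t) - U (suW s l i t) = 0 := by
    intro i l hl
    have h1 : min (s l) t = t := min_eq_right hl
    have h2 : min (s (l + 1)) t = t :=
      min_eq_right (hl.trans (hsmono (Nat.lt_succ_self l)).le)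
    have hv : suV s l i t = fun _ => t := by
      funext j; simp [suV, h1, h2]
    have hw : suW s l i t = fun _ => t := by
      funext j; simp [suW, h1, h2]
    rw [hv, hw, sub_self]
  refine ⟨hvanish, ?_⟩
  obtain ⟨L, hL⟩ := (hsunbdd.eventually_ge_atTop t).exists
  -- each finsum is a finite sum over `range L`
  have hfin : ∀ i : Fin m,
      ∑ᶠ l : ℕ, (U (suV s l i t) - U (suW s l i t)) =
        ∑ l ∈ Finset.range L, (U (suV s l i t) - U (suW s l i t)) := by
    intro i
    apply finsum_eq_finset_sum_of_support_subset
    intro l hl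
    simp only [Function.mem_support] at hl
    simp only [Finset.coe_range, Set.mem_Iio]
    by_contra h
    push_neg at h
    exact hl (hvanish i l (hL.trans (hsmono.monotone h)))
  simp_rw [hfin]
  rw [Finset.sum_comm]
  -- inner telescoping over i
  have hinner : ∀ l : ℕ,
      ∑ i : Fin m, (U (suV s l i t) - U (suW s l i t)) =
        U (fun _ => min (s (l + 1)) t) - U (fun _ => min (s l) t) := by
    intro l
    set g : ℕ → (Fin m → ℝ) := fun k j => if (j : ℕ) < k then min (s (l + 1)) t
      else min (s l) t with hg
    have hV : ∀ i : Fin m, suV s l i t = g (i + 1) := by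
      intro i; funext j
      simp only [suV, hg, Nat.lt_succ_iff, Fin.le_def]
    have hW : ∀ i : Fin m, suW s l i t = g i := by
      intro i; funext j
      simp only [suW, hg, Fin.lt_def]
    calc ∑ i : Fin m, (U (suV s l i t) - U (suW s l i t))
        = ∑ k ∈ Finset.range m, (U (g (k + 1)) - U (g k)) := by
          rw [← Fin.sum_univ_eq_sum_range (fun k => U (g (k + 1)) - U (g k))]
          exact Finset.sum_congr rfl fun i _ => by rw [hV i, hW i]
      _ = U (g m) - U (g 0) := Finset.sum_range_sub (fun k => U (g k)) m
      _ = U (fun _ => min (s (l + 1)) t) - U (fun _ => min (s l) t) := by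
          have h1 : g m = fun _ => min (s (l + 1)) t := by
            funext j; simp [hg, j.isLt]
          have h2 : g 0 = fun _ => min (s l) t := by
            funext j; simp [hg]
          rw [h1, h2]
  simp_rw [hinner]
  rw [Finset.sum_range_sub (fun l => U (fun _ => min (s l) t))]
  congr 2
  · funext j; exact min_eq_right hL
  · funext j; rw [hs0, min_eq_left ht]
end

section
/- Let m ≥ 1, let E_1,…,E_m be nonempty sets, let Y = (Y_1,…,Y_m) with Y_i : [0,∞) → E_i arbitrary functions, and let ρ be any function from m-tuples of such paths into an additive commutative group G. For r ≥ 0 let Y_i^r denote the stopped path Y_i^r(u) = Y_i(u) for u ≤ r and Y_i^r(u) = Y_i(r) for u > r, and set U(t_1,…,t_m) = ρ(Y_1^{t_1},…,Y_m^{t_m}). Let 0 = s_0 < s_1 < ⋯ be an unbounded partition and let D_i(t) = Σ_{l≥0} [U(v^{l,i}(t)) − U(w^{l,i}(t))] be the i-th SU component, where v^{l,i}(t) has coordinates s_{l+1}∧t in positions 1,…,i and s_l∧t in positions i+1,…,m, and w^{l,i}(t) agrees with v^{l,i}(t) except that its i-th coordinate is s_l∧t. Suppose 0 ≤ a < b,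 Y_i is constant on the closed interval [a,b], and a is a point of the partition (a = s_k for some k, or a = 0). Then D_i is constant on [a,b]: D_i(t) = D_i(a) for all t ∈ [a,b]. -/
open Filter Topology Set

/-- The stopped path `Y^r`: `Y^r(u) = Y(u)` for `u ≤ r` and `Y^r(u) = Y(r)` for `u > r`. -/
noncomputable def stoppedPath {E : Type*} (Y : ℝ → E) (r : ℝ) : ℝ → E :=
  fun u => if u ≤ r then Y u else Y r


lemma stoppedPath_eq_of_const {E : Type*} (Y : ℝ → E) {a b r r' : ℝ}
    (hconst : ∀ u ∈ Icc a b, ∀ v ∈ Icc a b, Y u = Y v)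
    (hr : r ∈ Icc a b) (hr' : r' ∈ Icc a b) :
    stoppedPath Y r = stoppedPath Y r' := by
  funext u
  unfold stoppedPath
  split_ifs with h1 h2 h2
  · rfl
  · exact hconst u ⟨hr'.1.trans (not_le.1 h2).le, h1.trans hr.2⟩ r' hr'
  · exact hconst r hr u ⟨hr.1.trans (not_le.1 h1).le, h2.trans hr'.2⟩
  · exact hconst r hr r' hr'

/-- normalization of the SU decomposition, Proposition 4.1. If `Y i` is
constant on `[a,b]` and `a` is a partition point (or `a = 0`), then the `i`-th SU component
`D_i(t) = Σ_l [U(v^{l,i}(t)) - U(w^{l,i}(t))]` of `t ↦ ρ(Y^t)` is constant on `[a,b]`. -/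
theorem su_decomposition_normalized
    {G : Type*} [AddCommGroup G] {m : ℕ} (hm : 1 ≤ m)
    {E : Fin m → Type*} (hE : ∀ i, Nonempty (E i))
    (Y : (i : Fin m) → ℝ → E i)
    (ρ : ((i : Fin m) → ℝ → E i) → G)
    (s : ℕ → ℝ) (hs0 : s 0 = 0) (hsmono : StrictMono s)
    (hsunbdd : Tendsto s atTop atTop)
    (i : Fin m) (a b : ℝ) (ha : 0 ≤ a) (hab : a < b)
    (hconst : ∀ u ∈ Icc a b, ∀ v ∈ Icc a b, Y i u = Y i v)
    (hpart : a = 0 ∨ ∃ k, s k = a) :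
    ∀ t ∈ Icc a b,
      (∑ᶠ l : ℕ, (ρ (fun j => stoppedPath (Y j) (suV s l i t j)) -
          ρ (fun j => stoppedPath (Y j) (suW s l i t j)))) =
      ∑ᶠ l : ℕ, (ρ (fun j => stoppedPath (Y j) (suV s l i a j)) -
          ρ (fun j => stoppedPath (Y j) (suW s l i a j))) := by
  obtain ⟨k, hk⟩ : ∃ k, s k = a := by
    rcases hpart with h | h
    · exact ⟨0, by rw [hs0, h]⟩
    · exact h
  intro t ht
  apply finsum_congr
  intro l
  rcases lt_or_ge l k with hl | hl
  · -- small blocks: all times equal termwise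
    have h1 : s (l + 1) ≤ a := hk ▸ hsmono.monotone (Nat.succ_le_of_lt hl)
    have h0 : s l ≤ a := (hsmono (Nat.lt_succ_self l)).le.trans h1
    have hv : suV s l i t = suV s l i a := by
      funext j
      unfold suV
      split_ifs
      · rw [min_eq_left (h1.trans ht.1), min_eq_left h1]
      · rw [min_eq_left (h0.trans ht.1), min_eq_left h0]
    have hw : suW s l i t = suW s l i a := by
      funext j
      unfold suW
      split_ifs
      · rw [min_eq_left (h1.trans ht.1), min_eq_left h1]
      · rw [min_eq_left (h0.trans ht.1), min_eq_left h0]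
    rw [hv, hw]
  · -- large blocks: both terms vanish
    have hla : a ≤ s l := hk ▸ hsmono.monotone hl
    have hla1 : a ≤ s (l + 1) := hla.trans (hsmono (Nat.lt_succ_self l)).le
    have key : ∀ t' ∈ Icc a b,
        (fun j => stoppedPath (Y j) (suV s l i t' j)) =
        (fun j => stoppedPath (Y j) (suW s l i t' j)) := by
      intro t' ht'
      funext j
      by_cases hj : j = i
      · subst hj
        have hvi : suV s l j t' j = min (s (l + 1)) t' := by simp [suV]
        have hwi : suW s l j t' j = min (s l) t' := by simp [suW]
        rw [hvi, hwi]
        exact stoppedPath_eq_of_const (Y j) hconst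
          ⟨le_min hla1 ht'.1, (min_le_right _ _).trans ht'.2⟩
          ⟨le_min hla ht'.1, (min_le_right _ _).trans ht'.2⟩
      · have : suV s l i t' j = suW s l i t' j := by
          unfold suV suW
          by_cases hji : j ≤ i
          · rw [if_pos hji, if_pos (lt_of_le_of_ne hji hj)]
          · rw [if_neg hji, if_neg fun h => hji h.le]
        rw [this]
    rw [key t ht, key a ⟨le_refl a, hab.le⟩, sub_self, sub_self]
end

section
/- Let (Ω, 𝒜, ℙ) be a probability space, m ≥ 1, Y = (Y_1,…,Y_m) an m-tuple of stochastic processes, and ρ a map assigning to each stopped tuple (Y_1^{t_1},…,Y_m^{t_m}) a real random variable. Let Π = (π^n)_{n∈ℕ} be an increasing sequence of unbounded partitions of [0,∞) with mesh tending to 0, and suppose the ISU decomposition D = (D_1,…,D_m) of t ↦ ρ(Y^t) with respect to Π exists, i.e. for each i and t the SU components D^n_i(t) with respect to π^n converge in probability to D_i(t). Fix i and 0 ≤ a < b, and suppose every path of Y_i is constant on the interval (a,b]. Then for all a < s ≤ t ≤ b, almost surely D_i(t) = D_i(s); i.e. the ISU decomposition is normalized. -/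
open Filter Topology Set MeasureTheory

/-- The componentwise stopped tuple of processes `Y^{(t_1,…,t_m)}`. -/
noncomputable def stopProc {Ω : Type*} {m : ℕ} {E : Fin m → Type*}
    (Y : (i : Fin m) → Ω → ℝ → E i) (tv : Fin m → ℝ) :
    (i : Fin m) → Ω → ℝ → E i :=
  fun i ω u => if u ≤ tv i then Y i ω u else Y i ω (tv i)

/-- normalization of the ISU decomposition, Proposition 4.2. If every
path of `Y i` is constant on `(a,b]` and the ISU decomposition exists (as limit in
probability of SU decompositions along an increasing sequence of unbounded partitions with
vanishing mesh), then for all `a < s ≤ t ≤ b`, almost surely `D_i(t) = D_i(s)`. -/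
theorem isu_decomposition_normalized
    {Ω : Type*} [MeasurableSpace Ω] (μ : Measure Ω) [IsProbabilityMeasure μ]
    {m : ℕ} (hm : 1 ≤ m) {E : Fin m → Type*} (hE : ∀ i, Nonempty (E i))
    (Y : (i : Fin m) → Ω → ℝ → E i)
    (ρ : ((i : Fin m) → Ω → ℝ → E i) → Ω → ℝ)
    (s : ℕ → ℕ → ℝ)
    (hs0 : ∀ n, s n 0 = 0) (hsmono : ∀ n, StrictMono (s n))
    (hsunbdd : ∀ n, Tendsto (s n) atTop atTop)
    (hincr : ∀ n, Set.range (s n) ⊆ Set.range (s (n + 1)))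
    (hmesh : ∀ ε > (0 : ℝ), ∃ N, ∀ n ≥ N, ∀ k, s n (k + 1) - s n k < ε)
    (D : Fin m → ℝ → Ω → ℝ)
    (hD : ∀ (i : Fin m) (t : ℝ), 0 ≤ t →
      TendstoInMeasure μ
        (fun n ω => ∑ᶠ l : ℕ,
          (ρ (stopProc Y (suV (s n) l i t)) ω - ρ (stopProc Y (suW (s n) l i t)) ω))
        atTop (D i t))
    (i : Fin m) (a b : ℝ) (ha : 0 ≤ a) (hab : a < b)
    (hconst : ∀ ω, ∀ u ∈ Ioc a b, ∀ v ∈ Ioc a b, Y i ω u = Y i ω v) :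
    ∀ s' t', a < s' → s' ≤ t' → t' ≤ b →
      ∀ᵐ ω ∂μ, D i t' ω = D i s' ω := by
  intro s' t' has' hst htb
  have hs'b : s' ≤ b := hst.trans htb
  have h0s' : (0:ℝ) ≤ s' := le_of_lt (lt_of_le_of_lt ha has')
  have h0t' : (0:ℝ) ≤ t' := h0s'.trans hst
  have hat' : a < t' := lt_of_lt_of_le has' hst
  obtain ⟨N, hN⟩ := hmesh (s' - a) (by linarith)
  -- stopped path lemma: stopped paths of `Y i` at two times in `(a,b]` coincide
  have hstop : ∀ u v : ℝ, a < u → u ≤ v → v ≤ b →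
      (fun (ω : Ω) (r : ℝ) => if r ≤ u then Y i ω r else Y i ω u)
        = (fun (ω : Ω) (r : ℝ) => if r ≤ v then Y i ω r else Y i ω v) := by
    intro u v hau huv hvb
    funext ω r
    by_cases hru : r ≤ u
    · simp [hru, hru.trans huv]
    · push_neg at hru
      by_cases hrv : r ≤ v
      · simp only [if_neg (not_le.mpr hru), if_pos hrv]
        exact (hconst ω r ⟨hau.trans hru, hrv.trans hvb⟩ u ⟨hau, huv.trans hvb⟩).symm
      · push_neg at hrv
        simp only [if_neg (not_le.mpr hru), if_neg (not_le.mpr hrv)]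
        exact hconst ω u ⟨hau, huv.trans hvb⟩ v ⟨hau.trans_le huv, hvb⟩
  -- if `a < s n l` and `t ∈ (a,b]` then the stopped tuples for `v` and `w` coincide
  have hzero : ∀ t, a < t → t ≤ b → ∀ n l, a < s n l →
      stopProc Y (suV (s n) l i t) = stopProc Y (suW (s n) l i t) := by
    intro t hat htb' n l hal
    have hpq : s n l ≤ s n (l + 1) := le_of_lt (hsmono n (Nat.lt_succ_self l))
    funext j
    by_cases hj : j = i
    · subst hj
      have h1 : suV (s n) l j t j = min (s n (l + 1)) t := by simp [suV]
      have h2 : suW (s n) l j t j = min (s n l) t := by simp [suW]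
      show (fun ω u => if u ≤ suV (s n) l j t j then Y j ω u else Y j ω (suV (s n) l j t j))
          = (fun ω u => if u ≤ suW (s n) l j t j then Y j ω u else Y j ω (suW (s n) l j t j))
      rw [h1, h2]
      exact (hstop (min (s n l) t) (min (s n (l+1)) t) (lt_min hal hat)
        (min_le_min hpq le_rfl) ((min_le_right _ _).trans htb')).symm
    · have hvw : suV (s n) l i t j = suW (s n) l i t j := by
        by_cases h : j < i
        · simp [suV, suW, h, le_of_lt h]
        · have h' : ¬ j ≤ i := fun hle => h (lt_of_le_of_ne hle hj)
          simp [suV, suW, h, h']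
      show (fun ω u => if u ≤ suV (s n) l i t j then Y j ω u else Y j ω (suV (s n) l i t j))
          = (fun ω u => if u ≤ suW (s n) l i t j then Y j ω u else Y j ω (suW (s n) l i t j))
      rw [hvw]
  -- for `n ≥ N`, the SU sums for `t'` and `s'` agree
  have hfg : ∀ n ≥ N,
      (fun ω => ∑ᶠ l : ℕ,
          (ρ (stopProc Y (suV (s n) l i t')) ω - ρ (stopProc Y (suW (s n) l i t')) ω))
      = (fun ω => ∑ᶠ l : ℕ,
          (ρ (stopProc Y (suV (s n) l i s')) ω - ρ (stopProc Y (suW (s n) l i s')) ω)) := by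
    intro n hn
    funext ω
    refine finsum_congr fun l => ?_
    by_cases hq : s n (l + 1) ≤ s'
    · have hp : s n l ≤ s' := (le_of_lt (hsmono n (Nat.lt_succ_self l))).trans hq
      have e1 : min (s n (l + 1)) t' = min (s n (l + 1)) s' := by
        rw [min_eq_left (hq.trans hst), min_eq_left hq]
      have e2 : min (s n l) t' = min (s n l) s' := by
        rw [min_eq_left (hp.trans hst), min_eq_left hp]
      have eV : suV (s n) l i t' = suV (s n) l i s' := by
        funext j; simp only [suV]; split_ifs <;> [exact e1; exact e2]
      have eW : suW (s n) l i t' = suW (s n) l i s' := by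
        funext j; simp only [suW]; split_ifs <;> [exact e1; exact e2]
      rw [eV, eW]
    · push_neg at hq
      have hmesh' := hN n hn l
      have hal : a < s n l := by linarith
      rw [hzero t' hat' htb n l hal, hzero s' has' hs'b n l hal, sub_self, sub_self]
  -- convergence in measure of both SU sequences
  have hDt := hD i t' h0t'
  have hDs := hD i s' h0s'
  -- the `s'` SU sequence also converges in measure to `D i t'`
  have hDs2 : TendstoInMeasure μ
      (fun n ω => ∑ᶠ l : ℕ,
          (ρ (stopProc Y (suV (s n) l i s')) ω - ρ (stopProc Y (suW (s n) l i s')) ω))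
      atTop (D i t') := by
    intro ε hε
    refine (hDt ε hε).congr' ?_
    filter_upwards [eventually_ge_atTop N] with n hn
    exact congrArg μ (by ext x; simp only [Set.mem_setOf_eq, congrFun (hfg n hn) x])
  obtain ⟨ns, hns, hae1⟩ := hDs2.exists_seq_tendsto_ae
  have hsub : TendstoInMeasure μ
      (fun k ω => ∑ᶠ l : ℕ,
          (ρ (stopProc Y (suV (s (ns k)) l i s')) ω - ρ (stopProc Y (suW (s (ns k)) l i s')) ω))
      atTop (D i s') := fun ε hε => (hDs ε hε).comp hns.tendsto_atTop
  obtain ⟨ms, hms, hae2⟩ := hsub.exists_seq_tendsto_ae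
  filter_upwards [hae1, hae2] with ω h1 h2
  exact tendsto_nhds_unique (h1.comp hms.tendsto_atTop) h2
end

section
/- Let m ≥ 1, let E_1,…,E_m be nonempty sets, Y = (Y_1,…,Y_m) with Y_i : [0,∞) → E_i, and ρ a function from m-tuples of such paths to ℝ. Write Y^t for the componentwise stopped tuple at time t. Suppose there is an unbounded partition 0 = u_0 < u_1 < u_2 < ⋯ of [0,∞) such that on each interval (u_l, u_{l+1}] at most one of the components Y_1,…,Y_m is non-constant. Let D = (D_1,…,D_m) and D̃ = (D̃_1,…,D̃_m) be tuples of right-continuous functions [0,∞) → ℝ with D_i(0) = D̃_i(0) = 0, and assume both are additive (Σ_i D_i(t) = ρ(Y^t) − ρ(Y^0) = Σ_i D̃_i(t) for all t ≥ 0) and normalized (if Y_i is constant on an interval (a,b], then D_i, respectively D̃_i, is constant on (a,b]). Then D_i(t) = D̃_i(t) for all i and all t ≥ 0. -/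
open Filter Topology Set

private lemma right_const_eval {f : ℝ → ℝ} {a b c : ℝ} (hab : a < b)
    (hf : ContinuousWithinAt f (Ici a) a)
    (hconst : ∀ x ∈ Ioc a b, f x = c) : f a = c := by
  have h1 : Tendsto f (𝓝[>] a) (𝓝 (f a)) := hf.mono Ioi_subset_Ici_self
  have h2 : Tendsto f (𝓝[>] a) (𝓝 c) := by
    have hmem : Ioc a b ∈ 𝓝[>] a := Ioc_mem_nhdsGT_of_mem ⟨le_rfl, hab⟩
    exact tendsto_const_nhds.congr' (Filter.eventuallyEq_of_mem hmem
      (fun x hx => (hconst x hx).symm))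
  exact tendsto_nhds_unique h1 h2

/-- deterministic uniqueness, core of Proposition 4.3 / Theorem 5.1.
For phased data (on each partition interval at most one component of `Y` is non-constant),
any two additive, normalized tuples of right-continuous functions starting at `0`
decomposing `t ↦ ρ(Y^t)` coincide. -/
theorem additive_normalized_decomposition_unique_for_phased
    {m : ℕ} (hm : 1 ≤ m) {E : Fin m → Type*} (hE : ∀ i, Nonempty (E i))
    (Y : (i : Fin m) → ℝ → E i)
    (ρ : ((i : Fin m) → ℝ → E i) → ℝ)
    (u : ℕ → ℝ) (hu0 : u 0 = 0) (humono : StrictMono u)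
    (huunbdd : Tendsto u atTop atTop)
    (hphased : ∀ l, ∃ i₀ : Fin m, ∀ j ≠ i₀,
      ∀ x ∈ Ioc (u l) (u (l + 1)), ∀ y ∈ Ioc (u l) (u (l + 1)), Y j x = Y j y)
    (D D' : Fin m → ℝ → ℝ)
    (hDrc : ∀ i t, 0 ≤ t → ContinuousWithinAt (D i) (Ici t) t)
    (hD'rc : ∀ i t, 0 ≤ t → ContinuousWithinAt (D' i) (Ici t) t)
    (hD0 : ∀ i, D i 0 = 0) (hD'0 : ∀ i, D' i 0 = 0)
    (hDadd : ∀ t, 0 ≤ t →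
      ∑ i : Fin m, D i t =
        ρ (fun i => stoppedPath (Y i) t) - ρ (fun i => stoppedPath (Y i) 0))
    (hD'add : ∀ t, 0 ≤ t →
      ∑ i : Fin m, D' i t =
        ρ (fun i => stoppedPath (Y i) t) - ρ (fun i => stoppedPath (Y i) 0))
    (hDnorm : ∀ (i : Fin m) (a b : ℝ), 0 ≤ a → a < b →
      (∀ x ∈ Ioc a b, ∀ y ∈ Ioc a b, Y i x = Y i y) →
      ∀ x ∈ Ioc a b, ∀ y ∈ Ioc a b, D i x = D i y)
    (hD'norm : ∀ (i : Fin m) (a b : ℝ), 0 ≤ a → a < b →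
      (∀ x ∈ Ioc a b, ∀ y ∈ Ioc a b, Y i x = Y i y) →
      ∀ x ∈ Ioc a b, ∀ y ∈ Ioc a b, D' i x = D' i y) :
    ∀ (i : Fin m) (t : ℝ), 0 ≤ t → D i t = D' i t := by
  set F : Fin m → ℝ → ℝ := fun i t => D i t - D' i t with hF
  have hFsum : ∀ t, 0 ≤ t → ∑ i, F i t = 0 := by
    intro t ht
    simp only [hF]
    rw [Finset.sum_sub_distrib, hDadd t ht, hD'add t ht, sub_self]
  have hul : ∀ l, (0:ℝ) ≤ u l := by
    intro l; rw [← hu0]; exact humono.monotone (Nat.zero_le l)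
  have key : ∀ l, ∀ i, ∀ t, 0 ≤ t → t ≤ u l → F i t = 0 := by
    intro l
    induction l with
    | zero =>
      intro i t ht ht'
      rw [hu0] at ht'
      have : t = 0 := le_antisymm ht' ht
      simp [hF, this, hD0, hD'0]
    | succ l ih =>
      intro i t ht htu
      by_cases h : t ≤ u l
      · exact ih i t ht h
      · push_neg at h
        have htIoc : t ∈ Ioc (u l) (u (l+1)) := ⟨h, htu⟩
        obtain ⟨i₀, hi₀⟩ := hphased l
        have hlt : u l < u (l+1) := humono (Nat.lt_succ_self l)
        have hj : ∀ j, j ≠ i₀ → F j t = 0 := by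
          intro j hjne
          have hYc := hi₀ j hjne
          have hDc := hDnorm j (u l) (u (l+1)) (hul l) hlt hYc
          have hD'c := hD'norm j (u l) (u (l+1)) (hul l) hlt hYc
          have hFc : ∀ x ∈ Ioc (u l) (u (l+1)), F j x = F j t := by
            intro x hx
            simp only [hF]
            rw [hDc x hx t htIoc, hD'c x hx t htIoc]
          have hrc : ContinuousWithinAt (F j) (Ici (u l)) (u l) := by
            simp only [hF]
            exact (hDrc j (u l) (hul l)).sub (hD'rc j (u l) (hul l))
          have h0 := right_const_eval hlt hrc hFc
          rw [← h0]
          exact ih j (u l) (hul l) le_rfl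
        by_cases hii : i = i₀
        · subst hii
          have hs := hFsum t ht
          rw [← Finset.add_sum_erase _ _ (Finset.mem_univ i)] at hs
          have hz : ∑ j ∈ Finset.univ.erase i, F j t = 0 :=
            Finset.sum_eq_zero (fun j hjmem => hj j (Finset.ne_of_mem_erase hjmem))
          linarith
        · exact hj i hii
  intro i t ht
  obtain ⟨l, hl⟩ := (huunbdd.eventually_ge_atTop t).exists
  have h := key l i t ht hl
  simp only [hF] at h
  exact sub_eq_zero.mp h
end

section
/- Let m ≥ 1, let E_1,…,E_m be topological spaces, Y = (Y_1,…,Y_m) with Y_i : [0,∞) → E_i right-continuous, and ρ a function from m-tuples of such paths to ℝ. Suppose there is an unbounded partition 0 = u_0 < u_1 < ⋯ of [0,∞) such that on each (u_l, u_{l+1}] at most one component of Y is non-constant; for each i, let A_i be the set of indices l such that Y_i is non-constant on (u_l, u_{l+1}]. Let D = (D_1,…,D_m) be right-continuous functions [0,∞) → ℝ with D_i(0) = 0, additive (Σ_i D_i(t) = ρ(Y^t) − ρ(Y^0) for all t) and normalized (Y_i constant on (a,b] implies D_i constant on (a,b]). Then for every i and t ≥ 0: D_i(t) = Σ_{l ∈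 A_i} [ ρ(Y^{u_{l+1}∧t}) − ρ(Y^{u_l∧t}) ]. -/
open Filter Topology Set

/-- If `f` is right-continuous at `a` and takes the value `f b` on all of `(a, b]`, then
`f a = f b`. -/
lemma right_cont_const_aux {f : ℝ → ℝ} {a b : ℝ} (hab : a < b)
    (hf : ContinuousWithinAt f (Ici a) a)
    (hc : ∀ x ∈ Ioc a b, f x = f b) : f a = f b := by
  have hcl : a ∈ closure (Ioc a b) := by
    rw [closure_Ioc hab.ne]
    exact left_mem_Icc.mpr hab.le
  haveI hne : (𝓝[Ioc a b] a).NeBot := mem_closure_iff_nhdsWithin_neBot.mp hcl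
  have h1 : Tendsto f (𝓝[Ioc a b] a) (𝓝 (f a)) := hf.mono (fun x hx => le_of_lt hx.1)
  have h2 : Tendsto f (𝓝[Ioc a b] a) (𝓝 (f b)) := by
    apply Tendsto.congr' _ tendsto_const_nhds
    filter_upwards [self_mem_nhdsWithin] with x hx
    exact (hc x hx).symm
  exact tendsto_nhds_unique h1 h2

/-- explicit telescoping representation for phased data. For phased
right-continuous data, any additive normalized decomposition `D` of `t ↦ ρ(Y^t)` by
right-continuous functions starting at `0` satisfies
`D_i(t) = Σ_{l ∈ A_i} [ρ(Y^{u_{l+1} ∧ t}) - ρ(Y^{u_l ∧ t})]`, where `A_i` is the set of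
partition intervals on which `Y i` is non-constant. -/
theorem additive_normalized_decomposition_telescopes_for_phased
    {m : ℕ} (hm : 1 ≤ m) {E : Fin m → Type*} [∀ i, TopologicalSpace (E i)]
    (hE : ∀ i, Nonempty (E i))
    (Y : (i : Fin m) → ℝ → E i)
    (hYrc : ∀ i t, 0 ≤ t → ContinuousWithinAt (Y i) (Ici t) t)
    (ρ : ((i : Fin m) → ℝ → E i) → ℝ)
    (u : ℕ → ℝ) (hu0 : u 0 = 0) (humono : StrictMono u)
    (huunbdd : Tendsto u atTop atTop)
    (hphased : ∀ l, ∃ i₀ : Fin m, ∀ j ≠ i₀,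
      ∀ x ∈ Ioc (u l) (u (l + 1)), ∀ y ∈ Ioc (u l) (u (l + 1)), Y j x = Y j y)
    (D : Fin m → ℝ → ℝ)
    (hDrc : ∀ i t, 0 ≤ t → ContinuousWithinAt (D i) (Ici t) t)
    (hD0 : ∀ i, D i 0 = 0)
    (hDadd : ∀ t, 0 ≤ t →
      ∑ i : Fin m, D i t =
        ρ (fun i => stoppedPath (Y i) t) - ρ (fun i => stoppedPath (Y i) 0))
    (hDnorm : ∀ (i : Fin m) (a b : ℝ), 0 ≤ a → a < b →
      (∀ x ∈ Ioc a b, ∀ y ∈ Ioc a b, Y i x = Y i y) →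
      ∀ x ∈ Ioc a b, ∀ y ∈ Ioc a b, D i x = D i y) :
    ∀ (i : Fin m) (t : ℝ), 0 ≤ t →
      D i t = ∑ᶠ l ∈ {l : ℕ | ¬ (∀ x ∈ Ioc (u l) (u (l + 1)),
            ∀ y ∈ Ioc (u l) (u (l + 1)), Y i x = Y i y)},
          (ρ (fun j => stoppedPath (Y j) (min (u (l + 1)) t)) -
            ρ (fun j => stoppedPath (Y j) (min (u l) t))) := by
  classical
  set A : Fin m → Set ℕ := fun j => {l : ℕ | ¬ (∀ x ∈ Ioc (u l) (u (l + 1)),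
      ∀ y ∈ Ioc (u l) (u (l + 1)), Y j x = Y j y)} with hA
  set g : ℕ → ℝ → ℝ := fun l s =>
      ρ (fun j => stoppedPath (Y j) (min (u (l + 1)) s)) -
        ρ (fun j => stoppedPath (Y j) (min (u l) s)) with hg
  have humon : Monotone u := humono.monotone
  have hu_nonneg : ∀ l, 0 ≤ u l := fun l => hu0 ▸ humon (Nat.zero_le l)
  -- terms with `u l ≥ s` vanish
  have hzero : ∀ l s, s ≤ u l → g l s = 0 := by
    intro l s hs
    have h1 : min (u (l + 1)) s = s := min_eq_right (hs.trans (humon (Nat.le_succ l)))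
    have h2 : min (u l) s = s := min_eq_right hs
    simp [hg, h1, h2]
  -- finsum to finset sum
  have key : ∀ (j : Fin m) (s : ℝ) (N : ℕ), s ≤ u N →
      (∑ᶠ l ∈ A j, g l s) = ∑ l ∈ Finset.range N, if l ∈ A j then g l s else 0 := by
    intro j s N hsN
    rw [show (∑ l ∈ Finset.range N, if l ∈ A j then g l s else 0)
        = ∑ l ∈ (Finset.range N).filter (· ∈ A j), g l s from (Finset.sum_filter _ _).symm]
    apply finsum_mem_eq_sum_of_inter_support_eq
    ext l
    simp only [Set.mem_inter_iff, Function.mem_support, Finset.coe_filter,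
      Finset.mem_range, Set.mem_setOf_eq]
    constructor
    · rintro ⟨hlA, hls⟩
      refine ⟨⟨?_, hlA⟩, hls⟩
      by_contra hlN
      exact hls (hzero l s (hsN.trans (humon (Nat.le_of_not_lt hlN))))
    · rintro ⟨⟨_, hlA⟩, hls⟩
      exact ⟨hlA, hls⟩
  -- main induction
  have main : ∀ (L : ℕ) (s : ℝ), 0 ≤ s → s ≤ u L → ∀ j, D j s = ∑ᶠ l ∈ A j, g l s := by
    intro L
    induction L with
    | zero =>
      intro s hs0 hsL j
      have hs : s = 0 := le_antisymm (hu0 ▸ hsL) hs0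
      subst hs
      rw [key j 0 1 (by rw [← hu0]; exact (humono Nat.zero_lt_one).le)]
      rw [hD0 j]
      rw [Finset.sum_range_one]
      have : g 0 0 = 0 := hzero 0 0 (le_of_eq hu0.symm)
      simp [this]
    | succ L ih =>
      intro s hs0 hsL j
      by_cases hcase : s ≤ u L
      · exact ih s hs0 hcase j
      push_neg at hcase
      -- u L < s ≤ u (L+1)
      have huL0 : (0 : ℝ) ≤ u L := hu_nonneg L
      have hLL : u L < u (L + 1) := humono (Nat.lt_succ_self L)
      obtain ⟨i₀, hi₀⟩ := hphased L
      -- constancy of D j on the interval for non-active components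
      have hDconst : ∀ (k : Fin m), (L ∉ A k) → D k s = D k (u L) := by
        intro k hk
        simp only [hA, Set.mem_setOf_eq, not_not] at hk
        have hDc := hDnorm k (u L) (u (L + 1)) huL0 hLL hk
        have hs_mem : s ∈ Ioc (u L) (u (L + 1)) := ⟨hcase, hsL⟩
        have hend : u (L + 1) ∈ Ioc (u L) (u (L + 1)) := ⟨hLL, le_refl _⟩
        have h1 : ∀ x ∈ Ioc (u L) (u (L + 1)), D k x = D k (u (L + 1)) := fun x hx =>
          hDc x hx _ hend
        have h2 := right_cont_const_aux hLL (hDrc k (u L) huL0) h1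
        rw [h1 s hs_mem, ← h2]
      -- for active components, the index is i₀
      have hactive : ∀ (k : Fin m), L ∈ A k → k = i₀ := by
        intro k hk
        by_contra hki
        exact hk (hi₀ k hki)
      -- additivity difference
      have hdiff : D i₀ s - D i₀ (u L) =
          ρ (fun j => stoppedPath (Y j) s) - ρ (fun j => stoppedPath (Y j) (u L)) := by
        have h1 := hDadd s (huL0.trans hcase.le)
        have h2 := hDadd (u L) huL0
        have h3 : ∑ k : Fin m, (D k s - D k (u L)) =
            ρ (fun j => stoppedPath (Y j) s) - ρ (fun j => stoppedPath (Y j) (u L)) := by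
          rw [Finset.sum_sub_distrib, h1, h2]; ring
        rw [← h3]
        rw [Finset.sum_eq_single_of_mem i₀ (Finset.mem_univ i₀)]
        intro k _ hki
        have hkA : L ∉ A k := by
          simp only [hA, Set.mem_setOf_eq, not_not]
          exact hi₀ k hki
        rw [hDconst k hkA]; ring
      -- compare the sums at s and at u L
      have hcomp : (∑ᶠ l ∈ A j, g l s) = (∑ᶠ l ∈ A j, g l (u L)) +
          (if L ∈ A j then
            ρ (fun j => stoppedPath (Y j) s) - ρ (fun j => stoppedPath (Y j) (u L))
           else 0) := by
        rw [key j s (L + 1) hsL, key j (u L) (L + 1) hLL.le]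
        rw [Finset.sum_range_succ, Finset.sum_range_succ]
        have hsmall : ∀ l ∈ Finset.range L,
            (if l ∈ A j then g l s else 0) = (if l ∈ A j then g l (u L) else 0) := by
          intro l hl
          rw [Finset.mem_range] at hl
          have h1 : u (l + 1) ≤ u L := humon hl
          have h2 : u l ≤ u L := humon hl.le
          have e1 : min (u (l + 1)) s = u (l + 1) := min_eq_left (h1.trans hcase.le)
          have e2 : min (u l) s = u l := min_eq_left (h2.trans hcase.le)
          have e3 : min (u (l + 1)) (u L) = u (l + 1) := min_eq_left h1
          have e4 : min (u l) (u L) = u l := min_eq_left h2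
          simp [hg, e1, e2, e3, e4]
        rw [Finset.sum_congr rfl hsmall]
        have hgL : g L (u L) = 0 := hzero L (u L) le_rfl
        have hgLs : g L s = ρ (fun j => stoppedPath (Y j) s) -
            ρ (fun j => stoppedPath (Y j) (u L)) := by
          have e1 : min (u (L + 1)) s = s := min_eq_right hsL
          have e2 : min (u L) s = u L := min_eq_left hcase.le
          simp [hg, e1, e2]
        by_cases hLj : L ∈ A j <;> simp [hLj, hgL, hgLs]
      rw [hcomp, ← ih (u L) huL0 le_rfl j]
      by_cases hLj : L ∈ A j
      · have hj : j = i₀ := hactive j hLj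
        subst hj
        simp only [hLj, if_true]
        linarith [hdiff]
      · simp only [hLj, if_false, add_zero]
        exact hDconst j hLj
  intro i t ht
  obtain ⟨L, hL⟩ : ∃ L, t ≤ u L := by
    have := huunbdd.eventually_ge_atTop t
    obtain ⟨L, hL⟩ := this.exists
    exact ⟨L, hL⟩
  exact main L t ht hL i
end
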